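/- One-dimensional sliding-supremum integral: Let f₀ : ℝ → ℝ be a probability density function (f₀ ≥ 0, measurable, ∫_ℝ f₀ = 1) that is symmetric around 0 (f₀(−x) = f₀(x) for all x) and non-increasing on [0, ∞). Then for every R > 0, ∫_ℝ sup_{x: |x| ≤ R} f₀(w − x) dw = 1 + 2R f₀(0). -/

import Mathlib

open MeasureTheory

/-- One-dimensional sliding-supremum integral: if `f₀` is a density on `ℝ`, symmetric
around `0` and non-increasing on `[0,∞)`, then
`∫_ℝ sup_{|x| ≤ R} f₀(w - x) dw = 1 + 2R f₀(0)` for every `R > 0`. -/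
theorem sliding_sup_integral_one_dim
    (f0 : ℝ → ℝ)
    (h_nonneg : ∀ x, 0 ≤ f0 x) (h_meas : Measurable f0)
    (h_int : ∫ x, f0 x = 1)
    (h_symm : ∀ x, f0 (-x) = f0 x)
    (h_mono : ∀ x y, 0 ≤ x → x ≤ y → f0 y ≤ f0 x)
    (R : ℝ) (hR : 0 < R) :
    ∫ w, ⨆ x ∈ Set.Icc (-R) R, f0 (w - x) = 1 + 2 * R * f0 0 := by
  have habs : ∀ t : ℝ, f0 |t| = f0 t := by
    intro t
    rcases abs_cases t with ⟨h, _⟩ | ⟨h, _⟩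
    · rw [h]
    · rw [h, h_symm]
  have uni : ∀ a b : ℝ, |a| ≤ |b| → f0 b ≤ f0 a := by
    intro a b h
    rw [← habs a, ← habs b]
    exact h_mono _ _ (abs_nonneg a) h
  have hbdd : ∀ w : ℝ, BddAbove (Set.range fun x : ℝ =>
      ⨆ _ : x ∈ Set.Icc (-R) R, f0 (w - x)) := by
    intro w
    refine ⟨f0 0, ?_⟩
    rintro y ⟨x, rfl⟩
    exact Real.iSup_le (fun _ => uni 0 (w - x) (by simp)) (h_nonneg 0)
  have key : ∀ (w x0 : ℝ), x0 ∈ Set.Icc (-R) R →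
      (∀ x ∈ Set.Icc (-R) R, f0 (w - x) ≤ f0 (w - x0)) →
      (⨆ x ∈ Set.Icc (-R) R, f0 (w - x)) = f0 (w - x0) := by
    intro w x0 hx0 hub
    refine le_antisymm ?_ ?_
    · exact Real.iSup_le (fun x => Real.iSup_le (fun hx => hub x hx) (h_nonneg _))
        (h_nonneg _)
    · have h := le_ciSup (hbdd w) x0
      rwa [ciSup_pos hx0] at h
  set g1 : ℝ → ℝ := (Set.Iio (-R)).indicator fun w => f0 (w + R) with hg1
  set g2 : ℝ → ℝ := (Set.Icc (-R) R).indicator fun _ => f0 0 with hg2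
  set g3 : ℝ → ℝ := (Set.Ioi R).indicator fun w => f0 (w - R) with hg3
  have hsup : ∀ w, (⨆ x ∈ Set.Icc (-R) R, f0 (w - x)) = g1 w + g2 w + g3 w := by
    intro w
    by_cases h1 : w < -R
    · have hk : (⨆ x ∈ Set.Icc (-R) R, f0 (w - x)) = f0 (w - (-R)) := by
        refine key w (-R) ⟨le_refl _, by linarith⟩ ?_
        intro x hx
        refine uni (w - (-R)) (w - x) ?_
        rw [abs_of_neg (by linarith : w - (-R) < 0),
          abs_of_neg (by linarith [hx.1] : w - x < 0)]
        linarith [hx.1]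
      have e1 : w ∈ Set.Iio (-R) := h1
      have e2 : w ∉ Set.Icc (-R) R := by
        simp only [Set.mem_Icc]; intro h; linarith [h.1]
      have e3 : w ∉ Set.Ioi R := by simp only [Set.mem_Ioi]; intro h; linarith
      rw [hk, hg1, hg2, hg3, Set.indicator_of_mem e1, Set.indicator_of_notMem e2,
        Set.indicator_of_notMem e3, sub_neg_eq_add]
      ring
    · by_cases h2 : w ≤ R
      · have hw : w ∈ Set.Icc (-R) R := ⟨le_of_not_gt h1, h2⟩
        have hk : (⨆ x ∈ Set.Icc (-R) R, f0 (w - x)) = f0 (w - w) := by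
          refine key w w hw ?_
          intro x hx
          exact uni (w - w) (w - x) (by simp)
        have e1 : w ∉ Set.Iio (-R) := h1
        have e3 : w ∉ Set.Ioi R := by simp only [Set.mem_Ioi]; intro h; linarith
        rw [hk, sub_self, hg1, hg2, hg3, Set.indicator_of_notMem e1,
          Set.indicator_of_mem hw, Set.indicator_of_notMem e3]
        ring
      · push_neg at h2
        have hk : (⨆ x ∈ Set.Icc (-R) R, f0 (w - x)) = f0 (w - R) := by
          refine key w R ⟨by linarith, le_refl _⟩ ?_
          intro x hx
          refine uni (w - R) (w - x) ?_
          rw [abs_of_pos (by linarith : (0:ℝ) < w - R),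
            abs_of_pos (by linarith [hx.2] : (0:ℝ) < w - x)]
          linarith [hx.2]
        have e1 : w ∉ Set.Iio (-R) := by
          simp only [Set.mem_Iio]; intro h; linarith
        have e2 : w ∉ Set.Icc (-R) R := by
          simp only [Set.mem_Icc]; intro h; linarith [h.2]
        rw [hk, hg1, hg2, hg3, Set.indicator_of_notMem e1,
          Set.indicator_of_notMem e2, Set.indicator_of_mem (Set.mem_Ioi.2 h2)]
        ring
  have hf0int : Integrable f0 := integrable_of_integral_eq_one h_int
  have hint1 : Integrable g1 :=
    ((hf0int.comp_add_right R).indicator measurableSet_Iio)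
  have hint2 : Integrable g2 :=
    (IntegrableOn.integrable_indicator
      (integrableOn_const measure_Icc_lt_top.ne) measurableSet_Icc)
  have hint3 : Integrable g3 :=
    ((hf0int.comp_sub_right R).indicator measurableSet_Ioi)
  have hI1 : ∫ w, g1 w = ∫ w in Set.Iio (0:ℝ), f0 w := by
    have : ∀ w : ℝ, g1 w = (Set.Iio (0:ℝ)).indicator f0 (w + R) := by
      intro w
      rw [hg1]
      by_cases h : w < -R
      · rw [Set.indicator_of_mem (Set.mem_Iio.2 h),
          Set.indicator_of_mem (Set.mem_Iio.2 (by linarith : w + R < 0))]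
      · rw [Set.indicator_of_notMem (by simpa using h),
          Set.indicator_of_notMem (by simp only [Set.mem_Iio]; intro h'; exact h (by linarith))]
    rw [show (fun w => g1 w) = fun w => (Set.Iio (0:ℝ)).indicator f0 (w + R) from funext this]
    rw [integral_add_right_eq_self ((Set.Iio (0:ℝ)).indicator f0) R,
      integral_indicator measurableSet_Iio]
  have hI3 : ∫ w, g3 w = ∫ w in Set.Ioi (0:ℝ), f0 w := by
    have : ∀ w : ℝ, g3 w = (Set.Ioi (0:ℝ)).indicator f0 (w - R) := by
      intro w
      rw [hg3]
      by_cases h : R < w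
      · rw [Set.indicator_of_mem (Set.mem_Ioi.2 h),
          Set.indicator_of_mem (Set.mem_Ioi.2 (by linarith : (0:ℝ) < w - R))]
      · rw [Set.indicator_of_notMem (by simpa using h),
          Set.indicator_of_notMem (by simp only [Set.mem_Ioi]; intro h'; exact h (by linarith))]
    rw [show (fun w => g3 w) = fun w => (Set.Ioi (0:ℝ)).indicator f0 (w - R) from funext this]
    rw [integral_sub_right_eq_self ((Set.Ioi (0:ℝ)).indicator f0) R,
      integral_indicator measurableSet_Ioi]
  have hI2 : ∫ w, g2 w = 2 * R * f0 0 := by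
    rw [hg2, integral_indicator_const (f0 0) measurableSet_Icc]
    rw [measureReal_def, Real.volume_Icc]
    rw [show R - -R = 2 * R by ring, ENNReal.toReal_ofReal (by linarith), smul_eq_mul]
  have hsplit : (∫ w in Set.Iio (0:ℝ), f0 w) + ∫ w in Set.Ioi (0:ℝ), f0 w = 1 := by
    rw [setIntegral_congr_set (Ioi_ae_eq_Ici (μ := volume)),
      intervalIntegral.integral_Iio_add_Ici hf0int.integrableOn hf0int.integrableOn, h_int]
  calc ∫ w, ⨆ x ∈ Set.Icc (-R) R, f0 (w - x) = ∫ w, (g1 w + g2 w + g3 w) := by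
        exact integral_congr_ae (Filter.Eventually.of_forall hsup)
    _ = (∫ w, g1 w) + (∫ w, g2 w) + ∫ w, g3 w := by
        have hadd12 : Integrable (fun w => g1 w + g2 w) := hint1.add hint2
        rw [integral_add hadd12 hint3, integral_add hint1 hint2]
    _ = 1 + 2 * R * f0 0 := by
        rw [hI1, hI2, hI3]
        linarith [hsplit]
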